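/- Let e be a regular expression over α and let A_e be its Antimirov automaton, the NFA with (finite) state set ρ(e), transition function the Antimirov derivative ∂, initial states ι(e), and accepting states the nullable expressions in ρ(e). If s : ρ(e) → RegularExpression α is a least solution to A_e, then ∑_{e' ∈ ι(e)} s(e') ⊴ e. -/

import Mathlib

/-- Homomorphic extension of `h : α → K` to regular expressions. -/
def interp {α : Type*} {K : Type*} [KleeneAlgebra K] (h : α → K) :
    RegularExpression α → K
  | .zero => 0
  | .epsilon => 1
  | .char a => h a
  | .plus e f => interp h e + interp h f
  | .comp e f => interp h e * interp h f
  | .star e => KStar.kstar (interp h e)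

universe u

/-- `e ⊴ f`: under every interpretation into any Kleene algebra, `ĥ e ≤ ĥ f`. -/
def kle {α : Type*} (e f : RegularExpression α) : Prop :=
  ∀ (K : Type u) [KleeneAlgebra K] (h : α → K), interp h e ≤ interp h f

/-- The Antimirov derivative of a regular expression with respect to a letter. -/
def aderiv {α : Type*} : RegularExpression α → α → Set (RegularExpression α)
  | .zero, _ => ∅
  | .epsilon, _ => ∅
  | .char b, a => {f | a = b ∧ f = 1}
  | .plus e f, a => aderiv e a ∪ aderiv f a
  | .comp e f, a =>
      (fun e' => e' * f) '' aderiv e a ∪ {f' | f' ∈ aderiv f a ∧ [] ∈ e.matches'}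
  | .star e, a => (fun e' => e' * e.star) '' aderiv e a

/-- The initial states of the Antimirov automaton of a regular expression. -/
def ini {α : Type*} : RegularExpression α → Set (RegularExpression α)
  | .zero => ∅
  | .epsilon => {1}
  | .char a => {RegularExpression.char a}
  | .plus e f => ini e ∪ ini f
  | .comp e f => (fun e' => e' * f) '' ini e
  | .star e => (fun e' => e' * e.star) '' ini e ∪ {1}

/-- The states of the Antimirov automaton of a regular expression. -/
def rho {α : Type*} : RegularExpression α → Set (RegularExpression α)
  | .zero => ∅
  | .epsilon => {1}
  | .char a => {RegularExpression.char a, 1}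
  | .plus e f => rho e ∪ rho f
  | .comp e f => (fun e' => e' * f) '' rho e ∪ rho f
  | .star e => (fun e' => e' * e.star) '' rho e ∪ {1}

/-- A solution to the Antimirov automaton `A_e`, whose states are the expressions in `ρ(e)`,
whose transitions are the Antimirov derivatives, and whose accepting states are the nullable
expressions in `ρ(e)`. -/
def AntimirovSolution {α : Type*} (e : RegularExpression α)
    (s : {f // f ∈ rho e} → RegularExpression α) : Prop :=
  (∀ f : {f // f ∈ rho e}, [] ∈ f.1.matches' → kle.{u} 1 (s f)) ∧
  ∀ (f : {f // f ∈ rho e}) (a : α) (g : {f // f ∈ rho e}), g.1 ∈ aderiv f.1 a →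
    kle.{u} (RegularExpression.char a * s g) (s f)

/-- A least solution to the Antimirov automaton of `e`. -/
def LeastAntimirovSolution {α : Type*} (e : RegularExpression α)
    (s : {f // f ∈ rho e} → RegularExpression α) : Prop :=
  AntimirovSolution.{u} e s ∧
  ∀ s' : {f // f ∈ rho e} → RegularExpression α, AntimirovSolution.{u} e s' →
    ∀ f, kle.{u} (s f) (s' f)


namespace AntimirovAux

variable {α : Type*}

theorem null_le {K : Type*} [KleeneAlgebra K] (h : α → K) :
    ∀ {x : RegularExpression α}, [] ∈ x.matches' → 1 ≤ interp h x
  | .zero, hx => by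
      have : ([] : List α) ∈ (0 : Language α) := hx
      exact absurd this (by simp [Language.notMem_zero])
  | .epsilon, _ => le_rfl
  | .char a, hx => by
      have : ([] : List α) ∈ ({[a]} : Language α) := hx
      exact absurd (Set.mem_singleton_iff.1 this) (by simp)
  | .plus p q, hx => by
      have hx' : [] ∈ p.matches' + q.matches' := hx
      rcases hx' with hx' | hx'
      · exact (null_le h hx').trans le_self_add
      · exact (null_le h hx').trans le_add_self
  | .comp p q, hx => by
      have hx' : [] ∈ p.matches' * q.matches' := hx
      obtain ⟨u, hu, v, hv, huv⟩ := hx'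
      obtain ⟨rfl, rfl⟩ := List.append_eq_nil_iff.1 huv
      calc (1 : K) = 1 * 1 := (one_mul 1).symm
        _ ≤ interp h p * interp h q :=
          (mul_le_mul_left (null_le h hu) _).trans (mul_le_mul_right (null_le h hv) _)
  | .star p, _ => one_le_kstar

theorem aderiv_le {K : Type*} [KleeneAlgebra K] (h : α → K) (a : α) :
    ∀ {x g : RegularExpression α}, g ∈ aderiv x a → h a * interp h g ≤ interp h x
  | .zero, g, hg => absurd hg (Set.notMem_empty g)
  | .epsilon, g, hg => absurd hg (Set.notMem_empty g)
  | .char b, g, hg => by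
      obtain ⟨rfl, rfl⟩ := hg
      exact le_of_eq (mul_one _)
  | .plus p q, g, hg => by
      rcases hg with hg | hg
      · exact (aderiv_le h a hg).trans le_self_add
      · exact (aderiv_le h a hg).trans le_add_self
  | .comp p q, g, hg => by
      rcases hg with ⟨p', hp', rfl⟩ | ⟨hq, hnull⟩
      · calc h a * (interp h p' * interp h q) = h a * interp h p' * interp h q :=
            (mul_assoc _ _ _).symm
          _ ≤ interp h p * interp h q := mul_le_mul_left (aderiv_le h a hp') _
      · calc h a * interp h g ≤ interp h q := aderiv_le h a hq
          _ = 1 * interp h q := (one_mul _).symm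
          _ ≤ interp h p * interp h q := mul_le_mul_left (null_le h hnull) _
  | .star p, g, hg => by
      obtain ⟨p', hp', rfl⟩ := hg
      calc h a * (interp h p' * interp h p.star)
          = h a * interp h p' * KStar.kstar (interp h p) := (mul_assoc _ _ _).symm
        _ ≤ interp h p * KStar.kstar (interp h p) := mul_le_mul_left (aderiv_le h a hp') _
        _ ≤ KStar.kstar (interp h p) := mul_kstar_le_kstar

theorem ini_le {K : Type*} [KleeneAlgebra K] (h : α → K) :
    ∀ {x g : RegularExpression α}, g ∈ ini x → interp h g ≤ interp h x
  | .zero, g, hg => absurd hg (Set.notMem_empty g)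
  | .epsilon, g, hg => by obtain rfl := hg; exact le_rfl
  | .char b, g, hg => by obtain rfl := hg; exact le_rfl
  | .plus p q, g, hg => by
      rcases hg with hg | hg
      · exact (ini_le h hg).trans le_self_add
      · exact (ini_le h hg).trans le_add_self
  | .comp p q, g, hg => by
      obtain ⟨p', hp', rfl⟩ := hg
      exact mul_le_mul_left (ini_le h hp') _
  | .star p, g, hg => by
      rcases hg with ⟨p', hp', rfl⟩ | rfl
      · exact (mul_le_mul_left (ini_le h hp') _).trans mul_kstar_le_kstar
      · exact one_le_kstar

theorem rho_finite : ∀ x : RegularExpression α, (rho x).Finite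
  | .zero => Set.finite_empty
  | .epsilon => Set.finite_singleton _
  | .char _ => (Set.finite_singleton _).insert _
  | .plus p q => (rho_finite p).union (rho_finite q)
  | .comp p q => ((rho_finite p).image _).union (rho_finite q)
  | .star p => ((rho_finite p).image _).union (Set.finite_singleton _)

theorem finsetSum_le {K : Type*} [IdemSemiring K] {β : Type*} {t : Finset β} {g : β → K}
    {c : K} (H : ∀ x ∈ t, g x ≤ c) : (∑ x ∈ t, g x) ≤ c := by
  classical
  induction t using Finset.induction_on with
  | empty => simp only [Finset.sum_empty]; exact zero_le
  | insert _ _ hx ih =>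
      rw [Finset.sum_insert hx, add_eq_sup]
      exact sup_le (H _ (Finset.mem_insert_self _ _))
        (ih fun x hx' => H _ (Finset.mem_insert_of_mem hx'))

/-- The list of letters occurring in a regular expression. -/
def letters : RegularExpression α → List α
  | .zero => []
  | .epsilon => []
  | .char a => [a]
  | .plus p q => letters p ++ letters q
  | .comp p q => letters p ++ letters q
  | .star p => letters p

universe v w

theorem kle_down {e f : RegularExpression α} (hef : kle.{v} e f)
    (K : Type w) [KleeneAlgebra K] (h : α → K) : interp h e ≤ interp h f := by
  classical
  set L : List α := letters e ++ letters f with hL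
  set g : Fin L.length → K := fun i => h L[i] with hg
  set S : Set K := Set.range (interp g) with hSdef
  have h0 : (0 : K) ∈ S := ⟨0, rfl⟩
  have h1 : (1 : K) ∈ S := ⟨1, rfl⟩
  have hadd : ∀ x ∈ S, ∀ y ∈ S, x + y ∈ S := by
    rintro _ ⟨r, rfl⟩ _ ⟨t, rfl⟩; exact ⟨r + t, rfl⟩
  have hmul : ∀ x ∈ S, ∀ y ∈ S, x * y ∈ S := by
    rintro _ ⟨r, rfl⟩ _ ⟨t, rfl⟩; exact ⟨r * t, rfl⟩
  have hks : ∀ x ∈ S, KStar.kstar x ∈ S := by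
    rintro _ ⟨r, rfl⟩; exact ⟨r.star, rfl⟩
  have hmemL : ∀ a ∈ L, h a ∈ S := by
    intro a ha
    obtain ⟨i, hi, hia⟩ := List.mem_iff_getElem.1 ha
    exact ⟨.char ⟨i, hi⟩, by simp [interp, hg, hia]⟩
  haveI hsmall : Small.{v} ↥S := small_range _
  set K0 : Type v := Shrink.{v} ↥S with hK0
  set ψ : ↥S ≃ K0 := equivShrink ↥S with hψ
  set ι₀ : K0 → K := fun x => ((ψ.symm x : ↥S) : K) with hι
  have hmem : ∀ x, ι₀ x ∈ S := fun x => (ψ.symm x).2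
  have hinj : Function.Injective ι₀ :=
    fun x y hxy => ψ.symm.injective (Subtype.ext hxy)
  letI : Zero K0 := ⟨ψ ⟨0, h0⟩⟩
  letI : One K0 := ⟨ψ ⟨1, h1⟩⟩
  letI : Add K0 := ⟨fun x y => ψ ⟨ι₀ x + ι₀ y, hadd _ (hmem x) _ (hmem y)⟩⟩
  letI : Mul K0 := ⟨fun x y => ψ ⟨ι₀ x * ι₀ y, hmul _ (hmem x) _ (hmem y)⟩⟩
  letI : KStar K0 := ⟨fun x => ψ ⟨KStar.kstar (ι₀ x), hks _ (hmem x)⟩⟩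
  letI : Max K0 := ⟨fun x y => x + y⟩
  letI : Bot K0 := ⟨(0 : K0)⟩
  letI : SMul ℕ K0 := ⟨fun n x => if n = 0 then 0 else x⟩
  letI : NatCast K0 := ⟨fun n => if n = 0 then (0 : K0) else 1⟩
  letI : Pow K0 ℕ := ⟨fun x n => npowRec n x⟩
  letI : LE K0 := ⟨fun x y => ι₀ x ≤ ι₀ y⟩
  letI : LT K0 := ⟨fun x y => ι₀ x < ι₀ y⟩
  have f0 : ι₀ 0 = 0 := by
    show ((ψ.symm (ψ ⟨0, h0⟩) : ↥S) : K) = 0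
    rw [Equiv.symm_apply_apply]
  have f1 : ι₀ 1 = 1 := by
    show ((ψ.symm (ψ ⟨1, h1⟩) : ↥S) : K) = 1
    rw [Equiv.symm_apply_apply]
  have fadd : ∀ x y, ι₀ (x + y) = ι₀ x + ι₀ y := by
    intro x y
    show ((ψ.symm (ψ ⟨ι₀ x + ι₀ y, _⟩) : ↥S) : K) = ι₀ x + ι₀ y
    rw [Equiv.symm_apply_apply]
  have fmul : ∀ x y, ι₀ (x * y) = ι₀ x * ι₀ y := by
    intro x y
    show ((ψ.symm (ψ ⟨ι₀ x * ι₀ y, _⟩) : ↥S) : K) = ι₀ x * ι₀ y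
    rw [Equiv.symm_apply_apply]
  have fks : ∀ x, ι₀ (KStar.kstar x) = KStar.kstar (ι₀ x) := by
    intro x
    show ((ψ.symm (ψ ⟨KStar.kstar (ι₀ x), _⟩) : ↥S) : K) = KStar.kstar (ι₀ x)
    rw [Equiv.symm_apply_apply]
  have fsup : ∀ x y, ι₀ (x ⊔ y) = ι₀ x ⊔ ι₀ y := by
    intro x y
    show ι₀ (x + y) = ι₀ x ⊔ ι₀ y
    rw [fadd, add_eq_sup]
  have fbot : ι₀ ⊥ = ⊥ := by
    show ι₀ 0 = ⊥
    rw [f0]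
    exact le_antisymm zero_le bot_le
  have fnsmul : ∀ (n : ℕ) (x), ι₀ (n • x) = n • ι₀ x := by
    intro n x
    cases n with
    | zero =>
        show ι₀ (if (0 : ℕ) = 0 then 0 else x) = 0 • ι₀ x
        rw [if_pos rfl, f0, zero_nsmul]
    | succ n =>
        show ι₀ (if n + 1 = 0 then 0 else x) = (n + 1) • ι₀ x
        rw [if_neg (Nat.succ_ne_zero n)]
        exact (nsmul_eq_self (Nat.succ_ne_zero n) _).symm
  have fnpow : ∀ (x) (n : ℕ), ι₀ (x ^ n) = ι₀ x ^ n := by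
    intro x n
    induction n with
    | zero =>
        show ι₀ (npowRec 0 x) = ι₀ x ^ 0
        rw [pow_zero]; exact f1
    | succ n ihn =>
        show ι₀ (npowRec n x * x) = ι₀ x ^ (n + 1)
        rw [fmul, show ι₀ (npowRec n x) = ι₀ x ^ n from ihn, pow_succ]
  have fnat : ∀ n : ℕ, ι₀ (n : K0) = (n : K) := by
    intro n
    cases n with
    | zero =>
        show ι₀ (if (0 : ℕ) = 0 then (0 : K0) else 1) = ((0 : ℕ) : K)
        rw [if_pos rfl, f0, Nat.cast_zero]
    | succ n =>
        show ι₀ (if n + 1 = 0 then (0 : K0) else 1) = ((n + 1 : ℕ) : K)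
        rw [if_neg (Nat.succ_ne_zero n), f1]
        have hcast : ∀ m : ℕ, ((m + 1 : ℕ) : K) = 1 := by
          intro m
          induction m with
          | zero => rw [Nat.cast_one]
          | succ k ihk => rw [Nat.cast_succ, ihk, add_idem]
        exact (hcast n).symm
  letI : KleeneAlgebra K0 :=
    hinj.kleeneAlgebra ι₀ Iff.rfl Iff.rfl f0 f1 fadd fmul fnsmul fnpow fnat fsup fbot fks
  set h₀ : α → K0 := fun a => if ha : a ∈ L then ψ ⟨h a, hmemL a ha⟩ else 1 with hh₀
  have key : ∀ x : RegularExpression α, (∀ a ∈ letters x, a ∈ L) →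
      ι₀ (interp h₀ x) = interp h x := by
    intro x
    induction x with
    | zero => intro _; exact f0
    | epsilon => intro _; exact f1
    | char a =>
        intro hsub
        have ha : a ∈ L := hsub a (by simp [letters])
        show ι₀ (h₀ a) = h a
        rw [hh₀]
        simp only [dif_pos ha]
        show ((ψ.symm (ψ ⟨h a, _⟩) : ↥S) : K) = h a
        rw [Equiv.symm_apply_apply]
    | plus p q ihp ihq =>
        intro hsub
        show ι₀ (interp h₀ p + interp h₀ q) = interp h p + interp h q
        rw [fadd, ihp fun a ha => hsub a (List.mem_append_left _ ha),
          ihq fun a ha => hsub a (List.mem_append_right _ ha)]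
    | comp p q ihp ihq =>
        intro hsub
        show ι₀ (interp h₀ p * interp h₀ q) = interp h p * interp h q
        rw [fmul, ihp fun a ha => hsub a (List.mem_append_left _ ha),
          ihq fun a ha => hsub a (List.mem_append_right _ ha)]
    | star p ihp =>
        intro hsub
        show ι₀ (KStar.kstar (interp h₀ p)) = KStar.kstar (interp h p)
        rw [fks, ihp hsub]
  have h2 : ι₀ (interp h₀ e) ≤ ι₀ (interp h₀ f) := hef K0 h₀
  rw [key e fun a ha => List.mem_append_left _ ha,
    key f fun a ha => List.mem_append_right _ ha] at h2
  exact h2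

theorem antimirovSolution_id (e : RegularExpression α) :
    AntimirovSolution.{v} e (fun f => f.1) := by
  constructor
  · intro f hf K _ h
    exact null_le h hf
  · intro f a g hg K _ h
    exact aderiv_le h a hg

end AntimirovAux

/-- The least solution of the Antimirov automaton of `e`, summed over the initial states
`ι(e)`, is provably below `e`. -/
theorem antimirov_solution_le {α : Type*} (e : RegularExpression α)
    (s : {f // f ∈ rho e} → RegularExpression α)
    (hs : LeastAntimirovSolution e s) :
    ∀ (K : Type*) [KleeneAlgebra K] (h : α → K),
      ∑ᶠ f ∈ {f : {g // g ∈ rho e} | f.1 ∈ ini e}, interp h (s f) ≤ interp h e := by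
  intro K _ h
  classical
  haveI : Finite {f // f ∈ rho e} := (AntimirovAux.rho_finite e).to_subtype
  have hfin : ({f : {g // g ∈ rho e} | f.1 ∈ ini e}).Finite := Set.toFinite _
  rw [finsum_mem_eq_finite_toFinset_sum _ hfin]
  apply AntimirovAux.finsetSum_le
  intro x hx
  have hxini : x.1 ∈ ini e := (hfin.mem_toFinset.1 hx)
  have h1 := hs.2 _ (AntimirovAux.antimirovSolution_id e) x
  have h2 : interp h (s x) ≤ interp h x.1 := AntimirovAux.kle_down h1 K h
  exact h2.trans (AntimirovAux.ini_le h hxini)
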